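/- Let p ∈ (1,2), q ∈ (0,p), and c > 0. The function W(t) = (2c)^{2/(p-q)} + (p(p-1)t/2)^{-2/p}, t > 0, satisfies W'(t) + 2(p-1)·W(t)^{(q+2)/2}·(W(t)^{(p-q)/2} − c) ≥ 0 for all t > 0. -/

import Mathlib

theorem stmt_7 (p q c : ℝ) (hp1 : 1 < p) (hp2 : p < 2) (hq0 : 0 < q) (hqp : q < p)
    (hc : 0 < c)
    (W : ℝ → ℝ)
    (hW : ∀ t : ℝ, 0 < t →
      W t = (2 * c) ^ (2 / (p - q)) + (2 / (p * (p - 1) * t)) ^ (2 / p)) :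
    ∀ t : ℝ, 0 < t →
      0 ≤ deriv W t + 2 * (p - 1) * W t ^ ((q + 2) / 2) * (W t ^ ((p - q) / 2) - c) := by
  intro t ht
  have hp0 : (0:ℝ) < p := by linarith
  have hK : (0:ℝ) < p * (p - 1) := by nlinarith
  set A : ℝ := (2 * c) ^ (2 / (p - q)) with hA
  set B : ℝ := (2 / (p * (p - 1))) ^ (2 / p) with hB
  have hBpos : 0 < B := Real.rpow_pos_of_pos (by positivity) _
  have hApos : 0 < A := Real.rpow_pos_of_pos (by positivity) _
  -- W agrees with an explicit function near t
  have hfe : ∀ s : ℝ, 0 < s → W s = A + B * s ^ (-(2 / p)) := by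
    intro s hs
    rw [hW s hs, hA, hB]
    congr 1
    rw [show 2 / (p * (p - 1) * s) = (2 / (p * (p - 1))) * s⁻¹ by field_simp,
      Real.mul_rpow (by positivity) (by positivity),
      Real.inv_rpow hs.le, ← Real.rpow_neg hs.le]
  have hEq : W =ᶠ[nhds t] fun s => A + B * s ^ (-(2 / p)) :=
    Filter.eventuallyEq_of_mem (Ioi_mem_nhds ht) (fun s hs => hfe s hs)
  have hderiv : deriv W t = B * (-(2 / p)) * t ^ (-(2 / p) - 1) := by
    rw [hEq.deriv_eq]
    have h1 : HasDerivAt (fun s : ℝ => s ^ (-(2 / p)))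
        (-(2 / p) * t ^ (-(2 / p) - 1)) t :=
      Real.hasDerivAt_rpow_const (Or.inl ht.ne')
    have h2 := (hasDerivAt_const t A).add (h1.const_mul B)
    rw [(show deriv (fun s => A + B * s ^ (-(2 / p))) t = _ from h2.deriv)]; ring
  have hWt : W t = A + B * t ^ (-(2 / p)) := hfe t ht
  have hBt : 0 < B * t ^ (-(2 / p)) := by positivity
  have hWtpos : 0 < W t := by rw [hWt]; positivity
  -- key: A ^ ((p-q)/2) = 2c
  have hpq : p - q ≠ 0 := sub_ne_zero.mpr hqp.ne'
  have hpne : p ≠ 0 := hp0.ne'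
  have hA2c : A ^ ((p - q) / 2) = 2 * c := by
    rw [hA, ← Real.rpow_mul (by positivity)]
    rw [show 2 / (p - q) * ((p - q) / 2) = 1 by field_simp]
    exact Real.rpow_one _
  have h2c : 2 * c ≤ W t ^ ((p - q) / 2) := by
    rw [← hA2c]
    exact Real.rpow_le_rpow hApos.le (by rw [hWt]; linarith) (by linarith)
  -- lower bound for the nonlinear term
  have hmul : W t ^ ((q + 2) / 2) * W t ^ ((p - q) / 2) = W t ^ ((p + 2) / 2) := by
    rw [← Real.rpow_add hWtpos]; ring_nf
  have hlow : B * (2 / (p * (p - 1))) * t ^ (-(2 / p) - 1) ≤ W t ^ ((p + 2) / 2) := by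
    have h1 : (B * t ^ (-(2 / p))) ^ ((p + 2) / 2) ≤ W t ^ ((p + 2) / 2) :=
      Real.rpow_le_rpow hBt.le (by rw [hWt]; linarith) (by positivity)
    refine le_trans (le_of_eq ?_) h1
    rw [Real.mul_rpow hBpos.le (by positivity),
      ← Real.rpow_mul (by positivity : (0:ℝ) ≤ 2 / (p * (p - 1))), ← Real.rpow_mul ht.le]
    rw [show (-(2 / p)) * ((p + 2) / 2) = -(2 / p) - 1 by field_simp; ring]
    rw [show (2 / p) * ((p + 2) / 2) = 2 / p + 1 by field_simp; ring]
    rw [Real.rpow_add (by positivity : (0:ℝ) < 2 / (p * (p - 1))), Real.rpow_one]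
  have hWq : 0 < W t ^ ((q + 2) / 2) := Real.rpow_pos_of_pos hWtpos _
  have hmain : W t ^ ((q + 2) / 2) * (W t ^ ((p - q) / 2) / 2) ≤
      W t ^ ((q + 2) / 2) * (W t ^ ((p - q) / 2) - c) := by
    apply mul_le_mul_of_nonneg_left (by linarith) hWq.le
  have hhalf : W t ^ ((p + 2) / 2) / 2 ≤ W t ^ ((q + 2) / 2) * (W t ^ ((p - q) / 2) - c) := by
    calc W t ^ ((p + 2) / 2) / 2 = W t ^ ((q + 2) / 2) * (W t ^ ((p - q) / 2) / 2) := by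
          rw [← hmul]; ring
      _ ≤ _ := hmain
  rw [hderiv]
  have hfin : B * (2 / p) * t ^ (-(2 / p) - 1) =
      2 * (p - 1) * (B * (2 / (p * (p - 1))) * t ^ (-(2 / p) - 1) / 2) := by
    have hp1ne : p - 1 ≠ 0 := (by linarith : (0:ℝ) < p - 1).ne'
    field_simp <;> ring
  nlinarith [mul_le_mul_of_nonneg_left hlow (by nlinarith : (0:ℝ) ≤ 2 * (p - 1) / 2),
    mul_le_mul_of_nonneg_left hhalf (by nlinarith : (0:ℝ) ≤ 2 * (p - 1))]
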